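/- (Accelerated rate, convex, SGC) Suppose f is convex and L-smooth with minimizer w*, and its unbiased stochastic gradients satisfy the strong growth condition E_z‖∇f(w,z)‖² ≤ ρ‖∇f(w)‖². Then SGD with Nesterov acceleration (the three-sequence scheme with step-size η = 1/(ρL) and parameters γ_k = (1/ρ + √(1/ρ² + 4γ_{k−1}²))/2, a_{k+1} = γ_k√(ηρ), α_k = γ_kη/(γ_kη + a_k²), β_k = 1) satisfies E[f(w_{k+1})] − f(w*) ≤ 2ρ²L‖w₀ − w*‖²/k². -/

import Mathlib

open scoped RealInnerProductSpace
open Finset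

section AuxAnalysis
variable {E : Type*} [NormedAddCommGroup E] [InnerProductSpace ℝ E] [CompleteSpace E]

lemma line_hasDerivAt (f : E → ℝ) (f' : E → E) (hgrad : ∀ u, HasGradientAt f (f' u) u)
    (x d : E) (t : ℝ) :
    HasDerivAt (fun s : ℝ => f (x + s • d)) ⟪f' (x + t • d), d⟫ t := by
  have hline : HasDerivAt (fun s : ℝ => x + s • d) d t := by
    simpa using ((hasDerivAt_id t).smul_const d).const_add x
  have hf : HasFDerivAt f (InnerProductSpace.toDual ℝ E (f' (x + t • d))) (x + t • d) :=
    (hasGradientAt_iff_hasFDerivAt).1 (hgrad _)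
  simpa [InnerProductSpace.toDual_apply_apply, Function.comp_def] using hf.comp_hasDerivAt t hline

lemma convex_lower (f : E → ℝ) (f' : E → E) (hconv : ConvexOn ℝ Set.univ f)
    (hgrad : ∀ u, HasGradientAt f (f' u) u) (x y : E) :
    f x + ⟪f' x, y - x⟫ ≤ f y := by
  have hD : HasDerivAt (fun s : ℝ => f (x + s • (y - x))) ⟪f' x, y - x⟫ 0 := by
    simpa using line_hasDerivAt f f' hgrad x (y - x) 0
  have hslope : Filter.Tendsto (fun t : ℝ => (f (x + t • (y - x)) - f x) / t)
      (nhdsWithin 0 (Set.Ioi 0)) (nhds ⟪f' x, y - x⟫) := by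
    have := hasDerivAt_iff_tendsto_slope.1 hD
    have h2 := this.mono_left (nhdsWithin_mono 0 (by
      intro t ht
      exact ne_of_gt (Set.mem_Ioi.1 ht)))
    refine h2.congr ?_
    intro t
    simp [slope_def_field, div_eq_inv_mul]
  have hle : ⟪f' x, y - x⟫ ≤ f y - f x := by
    refine le_of_tendsto hslope ?_
    filter_upwards [Ioo_mem_nhdsGT one_pos] with t ht
    have ht0 : 0 < t := ht.1
    have ht1 : t < 1 := ht.2
    have hcvx := hconv.2 (Set.mem_univ x) (Set.mem_univ y)
      (by linarith : (0:ℝ) ≤ 1 - t) ht0.le (by ring)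
    simp only [smul_eq_mul] at hcvx
    have hxy : (1 - t) • x + t • y = x + t • (y - x) := by
      module
    rw [hxy] at hcvx
    rw [div_le_iff₀ ht0]
    calc f (x + t • (y - x)) - f x ≤ (1 - t) * f x + t * f y - f x := by linarith
      _ = (f y - f x) * t := by ring
  linarith

lemma smooth_upper (f : E → ℝ) (f' : E → E) {L : ℝ} (hL : 0 < L)
    (hgrad : ∀ u, HasGradientAt f (f' u) u)
    (hlip : LipschitzWith (Real.toNNReal L) f') (x y : E) :
    f y ≤ f x + ⟪f' x, y - x⟫ + L / 2 * ‖y - x‖ ^ 2 := by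
  set d := y - x with hd
  set ψ : ℝ → ℝ := fun t => f (x + t • d) - ⟪f' x, d⟫ * t - L * ‖d‖ ^ 2 / 2 * t ^ 2 with hψ
  have hder : ∀ t : ℝ, HasDerivAt ψ
      (⟪f' (x + t • d), d⟫ - ⟪f' x, d⟫ - L * ‖d‖ ^ 2 / 2 * (2 * t)) t := by
    intro t
    have h := ((line_hasDerivAt f f' hgrad x d t).sub
      ((hasDerivAt_id t).const_mul ⟪f' x, d⟫)).sub
      ((hasDerivAt_pow 2 t).const_mul (L * ‖d‖ ^ 2 / 2))
    exact h.congr_deriv (by norm_num)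
  have hanti : AntitoneOn ψ (Set.Icc 0 1) := by
    apply antitoneOn_of_deriv_nonpos (convex_Icc 0 1)
    · exact fun t _ => (hder t).continuousAt.continuousWithinAt
    · exact fun t _ => ((hder t).differentiableAt).differentiableWithinAt
    · intro t ht
      rw [interior_Icc] at ht
      rw [(hder t).deriv]
      have hip : ⟪f' (x + t • d) - f' x, d⟫ ≤ L * t * ‖d‖ ^ 2 := by
        calc ⟪f' (x + t • d) - f' x, d⟫ ≤ ‖f' (x + t • d) - f' x‖ * ‖d‖ :=
              real_inner_le_norm _ _
          _ ≤ (L * (t * ‖d‖)) * ‖d‖ := by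
              apply mul_le_mul_of_nonneg_right _ (norm_nonneg d)
              have := hlip.dist_le_mul (x + t • d) x
              rw [Real.coe_toNNReal L hL.le] at this
              calc ‖f' (x + t • d) - f' x‖ = dist (f' (x + t • d)) (f' x) := by
                    rw [dist_eq_norm]
                _ ≤ L * dist (x + t • d) x := this
                _ = L * (t * ‖d‖) := by
                    rw [dist_eq_norm]
                    simp [norm_smul, abs_of_pos ht.1]
          _ = L * t * ‖d‖ ^ 2 := by ring
      have : ⟪f' (x + t • d) - f' x, d⟫ = ⟪f' (x + t • d), d⟫ - ⟪f' x, d⟫ := by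
        rw [inner_sub_left]
      nlinarith [ht.1.le]
  have h01 := hanti (Set.mem_Icc.2 ⟨le_refl 0, zero_le_one⟩)
    (Set.mem_Icc.2 ⟨zero_le_one, le_refl 1⟩) zero_le_one
  have h0 : ψ 0 = f x := by simp [hψ]
  have hxd : x + d = y := by rw [hd]; abel
  have h1 : ψ 1 = f y - ⟪f' x, d⟫ - L * ‖d‖ ^ 2 / 2 := by simp [hψ, hxd]
  rw [h0, h1] at h01
  linarith

lemma key_step (n : ℕ) (hn : 0 < n)
    (f : E → ℝ) (f' : E → E) (G : E → Fin n → E)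
    (ρ L η g A A' αv : ℝ) (W V wstar : E)
    (hL : 0 < L) (hρ : 1 ≤ ρ)
    (hconv : ConvexOn ℝ Set.univ f)
    (hgrad : ∀ u, HasGradientAt f (f' u) u)
    (hlip : LipschitzWith (Real.toNNReal L) f')
    (hunbiased : ∀ u, (1 / (n : ℝ)) • ∑ z, G u z = f' u)
    (hsgc : ∀ u, (1 / (n : ℝ)) * ∑ z, ‖G u z‖ ^ 2 ≤ ρ * ‖f' u‖ ^ 2)
    (hη : η = 1 / (ρ * L))
    (hA'sq : A' ^ 2 = g ^ 2 * η * ρ)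
    (hrel : g ^ 2 * η * ρ = A ^ 2 + g * η)
    (hg : 0 < g)
    (hαv : αv = g * η / (g * η + A ^ 2)) :
    (∑ z : Fin n, (‖(V - (g * η) • G (αv • V + (1 - αv) • W) z) - wstar‖ ^ 2
        + 2 * A' ^ 2 * (f ((αv • V + (1 - αv) • W) - η • G (αv • V + (1 - αv) • W) z) - f wstar)))
        / (n : ℝ)
      ≤ ‖V - wstar‖ ^ 2 + 2 * A ^ 2 * (f W - f wstar) := by
  have hnR : (0:ℝ) < n := by exact_mod_cast hn
  have hρ0 : (0:ℝ) < ρ := lt_of_lt_of_le one_pos hρ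
  have hη0 : 0 < η := by rw [hη]; positivity
  have hone : η * ρ * L = 1 := by rw [hη]; field_simp
  set ζ : E := αv • V + (1 - αv) • W with hζdef
  set gb : E := f' ζ with hgb
  have hub : ∑ z : Fin n, G ζ z = (n : ℝ) • gb := by
    have h1 := hunbiased ζ
    rw [hgb, ← h1, smul_smul, mul_one_div, div_self (ne_of_gt hnR), one_smul]
  set Vn : ℝ := ‖V - wstar‖ ^ 2 with hVn
  set r : ℝ := ‖gb‖ ^ 2 with hr
  set s : ℝ := ⟪gb, V - W⟫ with hsdef
  set q : ℝ := ⟪gb, ζ - wstar⟫ with hqdef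
  set T2 : ℝ := ∑ z : Fin n, ‖G ζ z‖ ^ 2 with hT2def
  have hgg : ⟪gb, gb⟫ = r := real_inner_self_eq_norm_sq gb
  have hsum_inner : ∀ X : E, (∑ z : Fin n, ⟪X, G ζ z⟫) = (n : ℝ) * ⟪X, gb⟫ := by
    intro X
    rw [← inner_sum, hub, real_inner_smul_right]
  -- per-z bound
  have hz : ∀ z : Fin n,
      ‖(V - (g * η) • G ζ z) - wstar‖ ^ 2 + 2 * A' ^ 2 * (f (ζ - η • G ζ z) - f wstar)
        ≤ (Vn + 2 * A' ^ 2 * (f ζ - f wstar))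
          + (-(2 * (g * η))) * ⟪V - wstar, G ζ z⟫
          + (-(2 * A' ^ 2 * η)) * ⟪gb, G ζ z⟫
          + ((g * η) ^ 2 + A' ^ 2 * L * η ^ 2) * ‖G ζ z‖ ^ 2 := by
    intro z
    have hnorm : ‖(V - (g * η) • G ζ z) - wstar‖ ^ 2
        = Vn - 2 * (g * η) * ⟪V - wstar, G ζ z⟫ + (g * η) ^ 2 * ‖G ζ z‖ ^ 2 := by
      have e : (V - (g * η) • G ζ z) - wstar = (V - wstar) - (g * η) • G ζ z := by abel
      rw [e, norm_sub_sq_real, real_inner_smul_right, norm_smul]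
      simp only [Real.norm_eq_abs, mul_pow, sq_abs]
      ring
    have hsm := smooth_upper f f' hL hgrad hlip ζ (ζ - η • G ζ z)
    have e2 : (ζ - η • G ζ z) - ζ = -(η • G ζ z) := by abel
    rw [e2, inner_neg_right, real_inner_smul_right, norm_neg, norm_smul] at hsm
    have habs : (‖η‖ * ‖G ζ z‖) ^ 2 = η ^ 2 * ‖G ζ z‖ ^ 2 := by
      rw [mul_pow, Real.norm_eq_abs, sq_abs]
    rw [habs] at hsm
    have h3 : 2 * A' ^ 2 * (f (ζ - η • G ζ z) - f wstar)
        ≤ 2 * A' ^ 2 * ((f ζ - f wstar) - η * ⟪gb, G ζ z⟫ + L / 2 * (η ^ 2 * ‖G ζ z‖ ^ 2)) := by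
      apply mul_le_mul_of_nonneg_left _ (by positivity)
      linarith
    rw [hnorm]
    linarith
  -- summed bound
  have hS : (∑ z : Fin n, (‖(V - (g * η) • G ζ z) - wstar‖ ^ 2
        + 2 * A' ^ 2 * (f (ζ - η • G ζ z) - f wstar)))
      ≤ (n : ℝ) * (Vn + 2 * A' ^ 2 * (f ζ - f wstar))
        + (-(2 * (g * η))) * ((n : ℝ) * ⟪V - wstar, gb⟫)
        + (-(2 * A' ^ 2 * η)) * ((n : ℝ) * r)
        + ((g * η) ^ 2 + A' ^ 2 * L * η ^ 2) * T2 := by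
    calc (∑ z : Fin n, (‖(V - (g * η) • G ζ z) - wstar‖ ^ 2
          + 2 * A' ^ 2 * (f (ζ - η • G ζ z) - f wstar)))
        ≤ ∑ z : Fin n, ((Vn + 2 * A' ^ 2 * (f ζ - f wstar))
          + (-(2 * (g * η))) * ⟪V - wstar, G ζ z⟫
          + (-(2 * A' ^ 2 * η)) * ⟪gb, G ζ z⟫
          + ((g * η) ^ 2 + A' ^ 2 * L * η ^ 2) * ‖G ζ z‖ ^ 2) :=
          Finset.sum_le_sum fun z _ => hz z
      _ = (n : ℝ) * (Vn + 2 * A' ^ 2 * (f ζ - f wstar))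
          + (-(2 * (g * η))) * ((n : ℝ) * ⟪V - wstar, gb⟫)
          + (-(2 * A' ^ 2 * η)) * ((n : ℝ) * r)
          + ((g * η) ^ 2 + A' ^ 2 * L * η ^ 2) * T2 := by
        rw [Finset.sum_add_distrib, Finset.sum_add_distrib, Finset.sum_add_distrib,
          ← Finset.mul_sum, ← Finset.mul_sum, ← Finset.mul_sum,
          hsum_inner, hsum_inner, hgg, Finset.sum_const, Finset.card_univ,
          Fintype.card_fin, nsmul_eq_mul, hT2def]
  -- SGC
  have hT2 : T2 ≤ (n : ℝ) * (ρ * r) := by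
    have h4 := hsgc ζ
    calc T2 = (n : ℝ) * ((1 / (n : ℝ)) * T2) := by field_simp
      _ ≤ (n : ℝ) * (ρ * r) := mul_le_mul_of_nonneg_left h4 hnR.le
  -- convexity facts
  have hWζ : W - ζ = αv • (W - V) := by rw [hζdef]; module
  have hcW : f ζ - f W ≤ αv * s := by
    have h5 := convex_lower f f' hconv hgrad ζ W
    have h6 : ⟪gb, W - ζ⟫ = -(αv * s) := by
      rw [hWζ, real_inner_smul_right, show W - V = -(V - W) by abel, inner_neg_right]
      simp [hsdef]
    rw [h6] at h5
    linarith
  have hq' : f ζ - f wstar ≤ q := by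
    have h5 := convex_lower f f' hconv hgrad ζ wstar
    have h6 : ⟪gb, wstar - ζ⟫ = -q := by
      rw [show wstar - ζ = -(ζ - wstar) by abel, inner_neg_right, hqdef]
    rw [h6] at h5
    linarith
  have hp : ⟪V - wstar, gb⟫ = (1 - αv) * s + q := by
    have hd : V - wstar = (1 - αv) • (V - W) + (ζ - wstar) := by rw [hζdef]; module
    rw [real_inner_comm, hd, inner_add_right, real_inner_smul_right, hsdef, hqdef]
  -- parameter identities
  have hden : 0 < g * η + A ^ 2 := by positivity
  have hα1 : g * η * (1 - αv) = A ^ 2 * αv := by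
    rw [hαv]; field_simp; ring
  have hA'2 : A' ^ 2 = A ^ 2 + g * η := hA'sq.trans hrel
  have hc3 : ((g * η) ^ 2 + A' ^ 2 * L * η ^ 2) * ρ = 2 * A' ^ 2 * η := by
    linear_combination (-η) * hA'sq + (A' ^ 2 * η) * hone
  -- nonnegative slack terms
  have hD1 : 0 ≤ 2 * A ^ 2 * (n : ℝ) * (αv * s - (f ζ - f W)) :=
    mul_nonneg (by positivity) (by linarith)
  have hD2 : 0 ≤ 2 * (g * η) * (n : ℝ) * (q - (f ζ - f wstar)) :=
    mul_nonneg (by positivity) (by linarith)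
  have hD3 : 0 ≤ ((g * η) ^ 2 + A' ^ 2 * L * η ^ 2) * ((n : ℝ) * (ρ * r) - T2) :=
    mul_nonneg (by positivity) (by linarith)
  -- exact identity
  have hident : (n : ℝ) * (Vn + 2 * A' ^ 2 * (f ζ - f wstar))
        + (-(2 * (g * η))) * ((n : ℝ) * ⟪V - wstar, gb⟫)
        + (-(2 * A' ^ 2 * η)) * ((n : ℝ) * r)
        + ((g * η) ^ 2 + A' ^ 2 * L * η ^ 2) * T2
      = (n : ℝ) * (Vn + 2 * A ^ 2 * (f W - f wstar))
        - 2 * A ^ 2 * (n : ℝ) * (αv * s - (f ζ - f W))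
        - 2 * (g * η) * (n : ℝ) * (q - (f ζ - f wstar))
        - ((g * η) ^ 2 + A' ^ 2 * L * η ^ 2) * ((n : ℝ) * (ρ * r) - T2) := by
    linear_combination (-(2 * (g * η)) * (n : ℝ)) * hp + (-(2 * (n : ℝ)) * s) * hα1
      + (2 * (n : ℝ) * (f ζ - f wstar)) * hA'2 + ((n : ℝ) * r) * hc3
  -- conclude
  have hfinal : (∑ z : Fin n, (‖(V - (g * η) • G ζ z) - wstar‖ ^ 2
        + 2 * A' ^ 2 * (f (ζ - η • G ζ z) - f wstar)))
      ≤ (n : ℝ) * (Vn + 2 * A ^ 2 * (f W - f wstar)) := by linarith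
  calc (∑ z : Fin n, (‖(V - (g * η) • G ζ z) - wstar‖ ^ 2
        + 2 * A' ^ 2 * (f (ζ - η • G ζ z) - f wstar))) / (n : ℝ)
      ≤ ((n : ℝ) * (Vn + 2 * A ^ 2 * (f W - f wstar))) / (n : ℝ) :=
        div_le_div_of_nonneg_right hfinal hnR.le
    _ = Vn + 2 * A ^ 2 * (f W - f wstar) := by field_simp

end AuxAnalysis

/-- Expectation over the first `k` steps of uniform i.i.d. noise in `Fin n`. -/
noncomputable def ExpN (n k : ℕ) (hn : 0 < n) (h : (ℕ → Fin n) → ℝ) : ℝ :=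
  (∑ σ : Fin k → Fin n, h (fun i => if hi : i < k then σ ⟨i, hi⟩ else ⟨0, hn⟩)) / (n : ℝ) ^ k

lemma ExpN_const (n k : ℕ) (hn : 0 < n) (c : ℝ) : ExpN n k hn (fun _ => c) = c := by
  have hnR : (0:ℝ) < n := by exact_mod_cast hn
  unfold ExpN
  rw [Finset.sum_const, Finset.card_univ]
  simp [Fintype.card_fun]
  field_simp

lemma ExpN_mono (n k : ℕ) (hn : 0 < n) (h g : (ℕ → Fin n) → ℝ)
    (hle : ∀ ω, h ω ≤ g ω) : ExpN n k hn h ≤ ExpN n k hn g := by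
  have hnR : (0:ℝ) < n := by exact_mod_cast hn
  unfold ExpN
  apply div_le_div_of_nonneg_right ?_ (by positivity)
  exact Finset.sum_le_sum fun σ _ => hle _

lemma ExpN_linear (n k : ℕ) (hn : 0 < n) (h : (ℕ → Fin n) → ℝ) (c b : ℝ) :
    ExpN n k hn (fun ω => c * h ω + b) = c * ExpN n k hn h + b := by
  have hnR : (0:ℝ) < n := by exact_mod_cast hn
  unfold ExpN
  rw [Finset.sum_add_distrib, Finset.sum_const, Finset.card_univ, ← Finset.mul_sum]
  simp only [Fintype.card_fun, Fintype.card_fin, nsmul_eq_mul]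
  field_simp
  push_cast
  ring

lemma ExpN_step (n k : ℕ) (hn : 0 < n) (h g : (ℕ → Fin n) → ℝ)
    (hyp : ∀ ω : ℕ → Fin n,
      (∑ z : Fin n, h (fun i => if i = k then z else ω i)) / (n : ℝ) ≤ g ω) :
    ExpN n (k+1) hn h ≤ ExpN n k hn g := by
  have hnR : (0:ℝ) < n := by exact_mod_cast hn
  have e : ∀ (τ : Fin k → Fin n) (z : Fin n),
      (fun i => if hi : i < k + 1 then (Fin.snoc τ z : Fin (k+1) → Fin n) ⟨i, hi⟩ else ⟨0, hn⟩)
        = (fun i => if i = k then z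
            else (fun j => if hj : j < k then τ ⟨j, hj⟩ else ⟨0, hn⟩) i) := by
    intro τ z; funext i
    rcases lt_trichotomy i k with hik | hik | hik
    · rw [dif_pos (Nat.lt_succ_of_lt hik), if_neg hik.ne]
      simp only [dif_pos hik]
      have h2 : (⟨i, Nat.lt_succ_of_lt hik⟩ : Fin (k+1)) = Fin.castSucc ⟨i, hik⟩ := rfl
      rw [h2, Fin.snoc_castSucc]
    · subst hik
      rw [dif_pos (Nat.lt_succ_self i), if_pos rfl]
      have h2 : (⟨i, Nat.lt_succ_self i⟩ : Fin (i+1)) = Fin.last i := rfl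
      rw [h2, Fin.snoc_last]
    · rw [dif_neg (by omega), if_neg (by omega)]
      simp only [dif_neg (by omega : ¬ i < k)]
  unfold ExpN
  set F : (Fin (k+1) → Fin n) → ℝ :=
    fun σ => h (fun i => if hi : i < k+1 then σ ⟨i, hi⟩ else ⟨0, hn⟩) with hF
  have hsum : ∑ σ : Fin (k+1) → Fin n, F σ
      = ∑ τ : Fin k → Fin n, ∑ z : Fin n, F (Fin.snoc τ z) := by
    calc ∑ σ : Fin (k+1) → Fin n, F σ
        = ∑ p : (Fin k → Fin n) × Fin n, F (Fin.snoc p.1 p.2) :=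
          (Fintype.sum_equiv
            ⟨fun p => Fin.snoc p.1 p.2, fun σ => (Fin.init σ, σ (Fin.last k)),
              fun p => by simp, fun σ => by simp [Fin.snoc_init_self]⟩
            _ _ (fun p => rfl)).symm
      _ = ∑ τ : Fin k → Fin n, ∑ z : Fin n, F (Fin.snoc τ z) := Fintype.sum_prod_type _
  rw [hsum]
  have key : ∀ τ : Fin k → Fin n, ∑ z : Fin n, F (Fin.snoc τ z)
      ≤ (n : ℝ) * g (fun i => if hi : i < k then τ ⟨i, hi⟩ else ⟨0, hn⟩) := by
    intro τ
    have h3 := hyp (fun i => if hi : i < k then τ ⟨i, hi⟩ else ⟨0, hn⟩)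
    rw [div_le_iff₀ hnR] at h3
    calc ∑ z : Fin n, F (Fin.snoc τ z)
        = ∑ z : Fin n, h (fun i => if i = k then z
            else (fun j => if hj : j < k then τ ⟨j, hj⟩ else ⟨0, hn⟩) i) :=
          Finset.sum_congr rfl fun z _ => congrArg h (e τ z)
      _ ≤ g (fun i => if hi : i < k then τ ⟨i, hi⟩ else ⟨0, hn⟩) * n := h3
      _ = (n:ℝ) * g _ := by ring
  calc (∑ τ : Fin k → Fin n, ∑ z : Fin n, F (Fin.snoc τ z)) / (n:ℝ) ^ (k+1)
      ≤ (∑ τ : Fin k → Fin n,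
          (n : ℝ) * g (fun i => if hi : i < k then τ ⟨i, hi⟩ else ⟨0, hn⟩)) / (n:ℝ) ^ (k+1) := by
        exact div_le_div_of_nonneg_right (Finset.sum_le_sum fun τ _ => key τ) (by positivity)
      _ = (∑ τ : Fin k → Fin n,
          g (fun i => if hi : i < k then τ ⟨i, hi⟩ else ⟨0, hn⟩)) / (n:ℝ) ^ k := by
        rw [← Finset.mul_sum, pow_succ]
        field_simp

/-- Accelerated rate for convex functions under the strong growth
condition: Nesterov-accelerated SGD with `η = 1/(ρL)` and the stated parameter
sequences achieves `E f(w_{k+1}) − f(w*) ≤ 2ρ²L‖w₀ − w*‖²/k²`. -/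
theorem accelerated_sgd_convex_sgc
    (d n : ℕ) (hn : 0 < n)
    (f : EuclideanSpace ℝ (Fin d) → ℝ)
    (f' : EuclideanSpace ℝ (Fin d) → EuclideanSpace ℝ (Fin d))
    (G : EuclideanSpace ℝ (Fin d) → Fin n → EuclideanSpace ℝ (Fin d))
    (ρ L η : ℝ) (w0 wstar : EuclideanSpace ℝ (Fin d))
    (γ a α : ℕ → ℝ)
    (w ζ v : (ℕ → Fin n) → ℕ → EuclideanSpace ℝ (Fin d))
    (hL : 0 < L) (hρ : 1 ≤ ρ)
    (hconv : ConvexOn ℝ Set.univ f)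
    (hgrad : ∀ u, HasGradientAt f (f' u) u)
    (hlip : LipschitzWith (Real.toNNReal L) f')
    (hmin : ∀ u, f wstar ≤ f u)
    (hunbiased : ∀ u, (1 / (n : ℝ)) • ∑ z, G u z = f' u)
    (hsgc : ∀ u, (1 / (n : ℝ)) * ∑ z, ‖G u z‖ ^ 2 ≤ ρ * ‖f' u‖ ^ 2)
    (hη : η = 1 / (ρ * L))
    (hγ0 : γ 0 = 0)
    (hγ : ∀ k, γ (k + 1) = (1 / ρ + Real.sqrt (1 / ρ ^ 2 + 4 * (γ k) ^ 2)) / 2)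
    (ha0 : a 0 = 0)
    (ha : ∀ k, a (k + 1) = γ k * Real.sqrt (η * ρ))
    (hα : ∀ k, α k = γ k * η / (γ k * η + (a k) ^ 2))
    (hw0 : ∀ ω, w ω 0 = w0) (hv0 : ∀ ω, v ω 0 = w0)
    (hζ : ∀ ω k, ζ ω k = α k • v ω k + (1 - α k) • w ω k)
    (hw : ∀ ω k, w ω (k + 1) = ζ ω k - η • G (ζ ω k) (ω k))
    (hv : ∀ ω k, v ω (k + 1) = v ω k - (γ k * η) • G (ζ ω k) (ω k)) :
    ∀ k : ℕ, 1 ≤ k →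
      ExpN n (k + 1) hn (fun ω => f (w ω (k + 1))) - f wstar
        ≤ 2 * ρ ^ 2 * L * ‖w0 - wstar‖ ^ 2 / (k : ℝ) ^ 2 := by
  have hρ0 : (0:ℝ) < ρ := lt_of_lt_of_le one_pos hρ
  have hρne : ρ ≠ 0 := ne_of_gt hρ0
  have hη0 : 0 < η := by rw [hη]; positivity
  have hone : η * ρ * L = 1 := by rw [hη]; field_simp
  -- γ lower bounds
  have hγge : ∀ m : ℕ, (m : ℝ) / (2 * ρ) ≤ γ m ∧ 0 ≤ γ m := by
    intro m
    induction m with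
    | zero => rw [hγ0]; norm_num
    | succ i ih =>
      have h2ρ : (0:ℝ) < 1 / (2 * ρ) := by positivity
      have hs : 2 * γ i ≤ Real.sqrt (1 / ρ ^ 2 + 4 * (γ i) ^ 2) := by
        rw [show 2 * γ i = Real.sqrt ((2 * γ i) ^ 2) from
          (Real.sqrt_sq (by linarith [ih.2])).symm]
        apply Real.sqrt_le_sqrt
        have : (0:ℝ) < 1 / ρ ^ 2 := by positivity
        nlinarith
      have h7 : γ i + 1 / (2 * ρ) ≤ γ (i + 1) := by
        rw [hγ i]
        have h8 : (1 : ℝ) / (2 * ρ) = (1 / ρ) / 2 := by ring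
        rw [h8]
        linarith
      constructor
      · have h9 : ((i : ℝ) + 1) / (2 * ρ) = (i : ℝ) / (2 * ρ) + 1 / (2 * ρ) := by ring
        push_cast
        rw [h9]
        linarith [ih.1]
      · linarith [ih.2]
  -- γ recurrence, multiplied by ρ
  have hγρ : ∀ m : ℕ, (γ (m + 1)) ^ 2 * ρ = γ (m + 1) + (γ m) ^ 2 * ρ := by
    intro m
    have hpos : (0:ℝ) ≤ 1 / ρ ^ 2 + 4 * (γ m) ^ 2 := by positivity
    have hs2 := Real.sq_sqrt hpos
    rw [hγ m]
    linear_combination (ρ / 4) * hs2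
      + ((1 / ρ + Real.sqrt (1 / ρ ^ 2 + 4 * γ m ^ 2)) / 2) * (mul_inv_cancel₀ hρne)
  -- a squared
  have haSq : ∀ m : ℕ, (a (m + 1)) ^ 2 = (γ m) ^ 2 * η * ρ := by
    intro m
    rw [ha m, mul_pow, Real.sq_sqrt (by positivity)]
    ring
  have hrel : ∀ m : ℕ, (γ (m + 1)) ^ 2 * η * ρ = (a (m + 1)) ^ 2 + γ (m + 1) * η := by
    intro m
    linear_combination η * hγρ m - haSq m
  -- trajectory depends only on the past
  have traj : ∀ m : ℕ, ∀ ω ω' : ℕ → Fin n, (∀ i, i < m → ω i = ω' i) →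
      w ω m = w ω' m ∧ v ω m = v ω' m := by
    intro m
    induction m with
    | zero => intro ω ω' _; rw [hw0, hw0, hv0, hv0]; exact ⟨rfl, rfl⟩
    | succ m ih =>
      intro ω ω' hagree
      obtain ⟨hwm, hvm⟩ := ih ω ω' (fun i hi => hagree i (Nat.lt_succ_of_lt hi))
      have hζm : ζ ω m = ζ ω' m := by rw [hζ, hζ, hwm, hvm]
      have hωm := hagree m (Nat.lt_succ_self m)
      constructor
      · rw [hw, hw, hζm, hωm]
      · rw [hv, hv, hζm, hωm, hvm]
  -- potential
  set Φ : ℕ → (ℕ → Fin n) → ℝ :=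
    fun m ω => ‖v ω m - wstar‖ ^ 2 + 2 * (a m) ^ 2 * (f (w ω m) - f wstar) with hΦ
  set C : ℝ := ‖w0 - wstar‖ ^ 2 with hCdef
  have hC0 : 0 ≤ C := by rw [hCdef]; positivity
  have hΦ1 : ∀ ω, Φ 1 ω = C := by
    intro ω
    have ha1 : a 1 = 0 := by rw [ha 0, hγ0, zero_mul]
    have hv1 : v ω 1 = w0 := by
      rw [hv ω 0, hv0, hγ0, zero_mul, zero_smul, sub_zero]
    simp only [hΦ, hv1, ha1]
    norm_num
    exact hCdef.symm
  have hE1 : ExpN n 1 hn (Φ 1) = C := by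
    rw [show Φ 1 = fun _ => C from funext hΦ1]
    exact ExpN_const n 1 hn C
  -- one step of the potential
  have hstep : ∀ m : ℕ, 1 ≤ m →
      ExpN n (m + 1) hn (Φ (m + 1)) ≤ ExpN n m hn (Φ m) := by
    intro m hm
    obtain ⟨j, rfl⟩ : ∃ j, m = j + 1 := ⟨m - 1, by omega⟩
    apply ExpN_step
    intro ω
    have hsame : ∀ z : Fin n,
        w (fun i => if i = j + 1 then z else ω i) (j + 1) = w ω (j + 1) ∧
        v (fun i => if i = j + 1 then z else ω i) (j + 1) = v ω (j + 1) := by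
      intro z
      have := traj (j + 1) (fun i => if i = j + 1 then z else ω i) ω
        (fun i hi => if_neg (by omega))
      exact this
    have hγj : 0 < γ (j + 1) := by
      have h10 := (hγge (j + 1)).1
      have h11 : (0:ℝ) < ((j : ℝ) + 1) / (2 * ρ) := by positivity
      push_cast at h10
      linarith
    have hkey := key_step n hn f f' G ρ L η (γ (j + 1)) (a (j + 1)) (a (j + 2))
      (α (j + 1)) (w ω (j + 1)) (v ω (j + 1)) wstar hL hρ hconv hgrad hlip
      hunbiased hsgc hη (haSq (j + 1)) (hrel j) hγj (hα (j + 1))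
    have hsummand : ∀ z : Fin n, Φ (j + 2) (fun i => if i = j + 1 then z else ω i)
        = ‖(v ω (j + 1) - (γ (j + 1) * η) •
              G (α (j + 1) • v ω (j + 1) + (1 - α (j + 1)) • w ω (j + 1)) z) - wstar‖ ^ 2
          + 2 * (a (j + 2)) ^ 2 *
            (f ((α (j + 1) • v ω (j + 1) + (1 - α (j + 1)) • w ω (j + 1))
              - η • G (α (j + 1) • v ω (j + 1) + (1 - α (j + 1)) • w ω (j + 1)) z)
              - f wstar) := by
      intro z
      have h1 := (hsame z).1
      have h2 := (hsame z).2
      have hζeq : ζ (fun i => if i = j + 1 then z else ω i) (j + 1)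
          = α (j + 1) • v ω (j + 1) + (1 - α (j + 1)) • w ω (j + 1) := by
        rw [hζ, h1, h2]
      simp only [hΦ]
      rw [show (j + 2) = (j + 1) + 1 from rfl, hv _ (j + 1), hw _ (j + 1), hζeq, h2]
      simp
    calc (∑ z : Fin n, Φ (j + 1 + 1) (fun i => if i = j + 1 then z else ω i)) / (n : ℝ)
        = (∑ z : Fin n,
            (‖(v ω (j + 1) - (γ (j + 1) * η) •
                G (α (j + 1) • v ω (j + 1) + (1 - α (j + 1)) • w ω (j + 1)) z) - wstar‖ ^ 2
              + 2 * (a (j + 2)) ^ 2 *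
                (f ((α (j + 1) • v ω (j + 1) + (1 - α (j + 1)) • w ω (j + 1))
                  - η • G (α (j + 1) • v ω (j + 1) + (1 - α (j + 1)) • w ω (j + 1)) z)
                  - f wstar))) / (n : ℝ) := by
          rw [Finset.sum_congr rfl fun z _ => hsummand z]
      _ ≤ ‖v ω (j + 1) - wstar‖ ^ 2 + 2 * (a (j + 1)) ^ 2 * (f (w ω (j + 1)) - f wstar) :=
          hkey
      _ = Φ (j + 1) ω := rfl
  -- chain
  have hch : ∀ j : ℕ, ExpN n (j + 1) hn (Φ (j + 1)) ≤ C := by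
    intro j
    induction j with
    | zero => exact le_of_eq hE1
    | succ i ih => exact le_trans (hstep (i + 1) (by omega)) ih
  -- conclude
  intro k hk
  have hk0 : (0:ℝ) < (k : ℝ) := by exact_mod_cast hk
  have hγk : 0 < γ k := by
    have h10 := (hγge k).1
    have h11 : (0:ℝ) < (k : ℝ) / (2 * ρ) := by positivity
    linarith
  set c : ℝ := 2 * (a (k + 1)) ^ 2 with hcdef
  have hceq : c = 2 * (γ k) ^ 2 * η * ρ := by rw [hcdef, haSq k]; ring
  have hc0 : 0 < c := by rw [hceq]; positivity
  have hup : ExpN n (k + 1) hn (fun ω => c * (f (w ω (k + 1)) - f wstar) + 0) ≤ C := by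
    refine le_trans (ExpN_mono n (k + 1) hn _ (Φ (k + 1)) ?_) (hch k)
    intro ω
    simp only [hΦ]
    have h12 : (0:ℝ) ≤ ‖v ω (k + 1) - wstar‖ ^ 2 := by positivity
    rw [hcdef]
    linarith
  have heq1 : ExpN n (k + 1) hn (fun ω => c * (f (w ω (k + 1)) - f wstar) + 0)
      = c * ExpN n (k + 1) hn (fun ω => f (w ω (k + 1)) - f wstar) + 0 :=
    ExpN_linear n (k + 1) hn _ c 0
  have heq2 : ExpN n (k + 1) hn (fun ω => f (w ω (k + 1)) - f wstar)
      = ExpN n (k + 1) hn (fun ω => f (w ω (k + 1))) - f wstar := by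
    have h13 : (fun ω : ℕ → Fin n => f (w ω (k + 1)) - f wstar)
        = fun ω => 1 * f (w ω (k + 1)) + (- f wstar) := by funext ω; ring
    rw [h13, ExpN_linear n (k + 1) hn _ 1 (- f wstar)]
    ring
  set X : ℝ := ExpN n (k + 1) hn (fun ω => f (w ω (k + 1))) - f wstar with hXdef
  have hcX : c * X ≤ C := by
    rw [heq1, heq2] at hup
    linarith
  -- lower bound on c
  have h5 : ((k : ℝ) / (2 * ρ)) ^ 2 ≤ (γ k) ^ 2 :=
    pow_le_pow_left₀ (by positivity) (hγge k).1 2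
  have h6 : ((k : ℝ) / (2 * ρ)) ^ 2 = (k : ℝ) ^ 2 / (4 * ρ ^ 2) := by
    field_simp; ring
  have hcb : (k : ℝ) ^ 2 ≤ 2 * ρ ^ 2 * L * c := by
    have h14 : 2 * ρ ^ 2 * L * c = 4 * ρ ^ 2 * (γ k) ^ 2 := by
      rw [hceq]
      linear_combination (4 * ρ ^ 2 * (γ k) ^ 2) * hone
    rw [h14]
    rw [h6] at h5
    rw [div_le_iff₀ (by positivity : (0:ℝ) < 4 * ρ ^ 2)] at h5
    linarith
  -- finish
  have hXC : X ≤ C / c := by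
    rw [le_div_iff₀ hc0]
    linarith [hcX]
  refine le_trans hXC ?_
  rw [div_le_div_iff₀ hc0 (by positivity)]
  nlinarith [mul_le_mul_of_nonneg_left hcb hC0]
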